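/- (Multiplier norm controls the block-decay norm) Let ν, d ≥ 1 and s ≥ 0. Let r be a φ-dependent Fourier multiplier of order −s − (d−1)/2 with ∥Op(r)∥_{−s−(d−1)/2, s} < ∞, and let R(φ) := Op(r(φ,·)). Then the block-decay norm of the family R satisfies |R|_s ≤ C ∥Op(r)∥_{−s−(d−1)/2, s}, for a constant C depending only on d. The same estimate holds between the corresponding Lipschitz-in-ω norms when r depends Lipschitz-continuously on a parameter ω. -/

import Mathlib

/-- Nonzero lattice points of `ℤ^d`. -/
abbrev Idx (d : ℕ) := {j : Fin d → ℤ // j ≠ 0}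

/-- Euclidean norm of a lattice point. -/
noncomputable def euclNormZ {n : ℕ} (j : Fin n → ℤ) : ℝ :=
  Real.sqrt (∑ i, ((j i : ℝ)) ^ 2)

/-- `|j|` for a nonzero lattice point. -/
noncomputable def jn {d : ℕ} (j : Idx d) : ℝ := euclNormZ j.1

/-- The set `σ₀(√−Δ)`, as a subtype of `ℝ`. -/
def specT (d : ℕ) := {r : ℝ // ∃ j : Idx d, jn j = r}

/-- The element `|j| ∈ σ₀(√−Δ)` attached to `j`. -/
noncomputable def specOf {d : ℕ} (j : Idx d) : specT d := ⟨jn j, j, rfl⟩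

/-- Weight `⟨ℓ⟩ := max{1,|ℓ|}`. -/
noncomputable def wt1 {ν : ℕ} (ℓ : Fin ν → ℤ) : ℝ := max 1 (euclNormZ ℓ)

/-- `H^s(𝕋^ν)` norm of a function of `φ` given by its Fourier coefficients. -/
noncomputable def sobNphi {ν : ℕ} (s : ℝ) (c : (Fin ν → ℤ) → ℂ) : ℝ :=
  Real.sqrt (∑' ℓ : Fin ν → ℤ, (wt1 ℓ) ^ (2 * s) * ‖c ℓ‖ ^ 2)

/-- A `φ`-dependent Fourier multiplier of order `m` is encoded by the `φ`-Fourier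
coefficients of its symbol, `r : ℤ^ν → σ₀(√−Δ) → ℂ`; its norm is
`∥Op(r)∥_{m,s} := sup_α ‖r(·,α)‖_{H^s(𝕋^ν)} α^{−m}`. -/
noncomputable def multN {ν d : ℕ} (m s : ℝ) (r : (Fin ν → ℤ) → specT d → ℂ) : ℝ :=
  ⨆ α : specT d, sobNphi s (fun ℓ => r ℓ α) * (α.1 : ℝ) ^ (-m)

/-- Finiteness of the multiplier norm `∥Op(r)∥_{m,s}`. -/
def MultFin {ν d : ℕ} (m s : ℝ) (r : (Fin ν → ℤ) → specT d → ℂ) : Prop :=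
  (∀ α : specT d,
    Summable fun ℓ : Fin ν → ℤ => (wt1 ℓ) ^ (2 * s) * ‖r ℓ α‖ ^ 2) ∧
  BddAbove (Set.range fun α : specT d => sobNphi s (fun ℓ => r ℓ α) * (α.1 : ℝ) ^ (-m))

/-- Euclidean distance on `ℝ^ν`. -/
noncomputable def eDistR {ν : ℕ} (a b : Fin ν → ℝ) : ℝ :=
  Real.sqrt (∑ i, (a i - b i) ^ 2)

/-- Pairs of distinct points of `Ω_o`. -/
def OmPairs {ν : ℕ} (Ωo : Set (Fin ν → ℝ)) :=
  {p : (Fin ν → ℝ) × (Fin ν → ℝ) // p.1 ∈ Ωo ∧ p.2 ∈ Ωo ∧ p.1 ≠ p.2}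

/-- The weighted Lipschitz norm `‖·‖^{Lip(γ)}` built from a "norm" `N`. -/
noncomputable def lipN {ν : ℕ} {A : Type*} [Sub A] (γ : ℝ) (Ωo : Set (Fin ν → ℝ))
    (N : A → ℝ) (f : (Fin ν → ℝ) → A) : ℝ :=
  (⨆ ω : Ωo, N (f ω)) +
    γ * ⨆ p : OmPairs Ωo, N (f p.1.1 - f p.1.2) / eDistR p.1.1 p.1.2

/-- Finiteness of the `Lip(γ)` norm built from `N` (with finiteness predicate `P`). -/
def LipFin {ν : ℕ} {A : Type*} [Sub A] (Ωo : Set (Fin ν → ℝ))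
    (N : A → ℝ) (P : A → Prop) (f : (Fin ν → ℝ) → A) : Prop :=
  (∀ ω ∈ Ωo, P (f ω)) ∧ (∀ ω₁ ∈ Ωo, ∀ ω₂ ∈ Ωo, P (f ω₁ - f ω₂)) ∧
  BddAbove (Set.range fun ω : Ωo => N (f ω)) ∧
  BddAbove (Set.range fun p : OmPairs Ωo => N (f p.1.1 - f p.1.2) / eDistR p.1.1 p.1.2)

/-- Squared Hilbert–Schmidt norm of the block `[M]_α^β`. -/
noncomputable def blockHSsq {d : ℕ} (M : Idx d → Idx d → ℂ) (α β : ℝ) : ℝ :=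
  ∑' j : Idx d, ∑' j' : Idx d, if jn j = α ∧ jn j' = β then ‖M j j'‖ ^ 2 else 0

/-- Weight `⟨ℓ,α,β⟩ := max{1,|ℓ|,α,β}`. -/
noncomputable def wt3 {ν : ℕ} (ℓ : Fin ν → ℤ) (α β : ℝ) : ℝ :=
  max 1 (max (euclNormZ ℓ) (max α β))

/-- `Σ_ℓ ⟨ℓ,α,β⟩^{2s} ‖[R̂(ℓ)]_α^β‖²_HS`. -/
noncomputable def decaySq {ν d : ℕ} (s : ℝ) (R : (Fin ν → ℤ) → Idx d → Idx d → ℂ)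
    (α β : ℝ) : ℝ :=
  ∑' ℓ : Fin ν → ℤ, (wt3 ℓ α β) ^ (2 * s) * blockHSsq (R ℓ) α β

/-- The block-decay norm `|R|_s`. -/
noncomputable def decayN {ν d : ℕ} (s : ℝ) (R : (Fin ν → ℤ) → Idx d → Idx d → ℂ) : ℝ :=
  ⨆ p : specT d × specT d, Real.sqrt (decaySq s R p.1.1 p.2.1)

/-- The (diagonal) matrix Fourier coefficients of the family `R(φ) = Op(r(φ,·))`:
`R̂(ℓ)_j^{j'} = r̂(ℓ,|j|) δ_{jj'}`. -/
noncomputable def diagOfSym {ν d : ℕ} (r : (Fin ν → ℤ) → specT d → ℂ) :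
    (Fin ν → ℤ) → Idx d → Idx d → ℂ :=
  fun ℓ j j' => if j = j' then r ℓ (specOf j) else 0

section Aux

variable {ν d : ℕ}

lemma sq_jn {d : ℕ} (j : Idx d) : jn j ^ 2 = ∑ i, ((j.1 i : ℝ)) ^ 2 := by
  rw [jn, euclNormZ, Real.sq_sqrt]
  exact Finset.sum_nonneg fun i _ => sq_nonneg _

lemma jn_nonneg {d : ℕ} (j : Idx d) : 0 ≤ jn j := Real.sqrt_nonneg _

lemma one_le_spec {d : ℕ} (α : specT d) : 1 ≤ α.1 := by
  obtain ⟨j, hj⟩ := α.2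
  rw [← hj, jn, euclNormZ]
  obtain ⟨i, hi⟩ := Function.ne_iff.mp j.2
  have h1 : (1:ℤ) ≤ |j.1 i| := Int.one_le_abs hi
  have h1' : (1:ℝ) ≤ |((j.1 i : ℝ))| := by
    rw [← Int.cast_abs]; exact_mod_cast h1
  have h2 : (1:ℝ) ≤ ((j.1 i : ℝ)) ^ 2 := by nlinarith [sq_abs ((j.1 i : ℝ))]
  have h3 : (1:ℝ) ≤ ∑ i', ((j.1 i' : ℝ)) ^ 2 :=
    h2.trans (Finset.single_le_sum (f := fun i' => ((j.1 i' : ℝ)) ^ 2) (fun i' _ => sq_nonneg _) (Finset.mem_univ i))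
  calc (1:ℝ) = Real.sqrt 1 := Real.sqrt_one.symm
    _ ≤ _ := Real.sqrt_le_sqrt h3

lemma spec_pos {d : ℕ} (α : specT d) : 0 < α.1 := lt_of_lt_of_le one_pos (one_le_spec α)

/-- Counting lemma: lattice points on the sphere of radius `a`. -/
lemma count_sphere {d : ℕ} (hd : 1 ≤ d) (a : ℝ) (ha : 1 ≤ a) :
    ∃ T : Finset (Idx d), (∀ j : Idx d, jn j = a → j ∈ T) ∧
      (T.card : ℝ) ≤ 2 * (5 * a) ^ (d - 1) := by
  classical
  set M : ℤ := ⌈a⌉ with hM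
  set L : Fin d := ⟨0, hd⟩ with hL
  have coordb : ∀ v : Fin d → ℤ, euclNormZ v = a → ∀ i, |(v i : ℝ)| ≤ a := by
    intro v hv i
    have hsum : ∑ i', ((v i' : ℝ)) ^ 2 = a ^ 2 := by
      rw [← hv, euclNormZ, Real.sq_sqrt]
      exact Finset.sum_nonneg fun _ _ => sq_nonneg _
    have h1 : ((v i : ℝ)) ^ 2 ≤ a ^ 2 := by
      rw [← hsum]
      exact Finset.single_le_sum (fun i' _ => sq_nonneg ((v i' : ℝ))) (Finset.mem_univ i)
    calc |(v i : ℝ)| = Real.sqrt (((v i : ℝ)) ^ 2) := (Real.sqrt_sq_eq_abs _).symm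
      _ ≤ Real.sqrt (a ^ 2) := Real.sqrt_le_sqrt h1
      _ = a := Real.sqrt_sq (by linarith)
  have coordmem : ∀ v : Fin d → ℤ, euclNormZ v = a → ∀ i, v i ∈ Finset.Icc (-M) M := by
    intro v hv i
    have hvi := coordb v hv i
    have habs : |v i| ≤ M := by
      have h2 : ((|v i| : ℤ) : ℝ) ≤ (M : ℝ) := by
        push_cast
        exact hvi.trans (Int.le_ceil a)
      exact_mod_cast h2
    rw [Finset.mem_Icc]
    exact abs_le.mp habs
  set B : Finset (Fin d → ℤ) := Fintype.piFinset (fun _ => Finset.Icc (-M) M) with hB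
  set S : Finset (Fin d → ℤ) := B.filter (fun v => euclNormZ v = a) with hS
  set T : Finset (Idx d) := S.subtype (· ≠ 0) with hT
  refine ⟨T, ?_, ?_⟩
  · intro j hj
    rw [hT, Finset.mem_subtype, hS, Finset.mem_filter]
    refine ⟨?_, hj⟩
    rw [hB, Fintype.mem_piFinset]
    exact fun i => coordmem j.1 hj i
  · set A : Fin d → Finset ℤ := fun i => if i = L then {0} else Finset.Icc (-M) M with hA
    set T0 : Finset ((Fin d → ℤ) × Bool) := (Fintype.piFinset A) ×ˢ Finset.univ with hT0
    have hinj : S.card ≤ T0.card := by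
      apply Finset.card_le_card_of_injOn
        (fun v => (Function.update v L 0, decide (0 ≤ v L)))
      · intro v hv
        rw [Finset.mem_coe, hS, Finset.mem_filter] at hv
        rw [Finset.mem_coe, hT0, Finset.mem_product]
        refine ⟨?_, Finset.mem_univ _⟩
        rw [Fintype.mem_piFinset]
        intro i
        simp only [hA]
        by_cases hi : i = L
        · subst hi
          simp
        · rw [if_neg hi]
          simp only [Function.update_of_ne hi]
          exact coordmem v hv.2 i
      · intro v hv w hw hvw
        rw [Finset.mem_coe, hS, Finset.mem_filter] at hv hw
        have h1 : ∀ i, i ≠ L → v i = w i := by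
          intro i hi
          have h := congrFun (congrArg Prod.fst hvw) i
          simp only at h
          rwa [Function.update_of_ne hi, Function.update_of_ne hi] at h
        have hsign : (0 ≤ v L) ↔ (0 ≤ w L) := by
          have h := congrArg Prod.snd hvw
          simpa using h
        have hsumv : ∑ i, ((v i : ℝ)) ^ 2 = a ^ 2 := by
          rw [← hv.2, euclNormZ, Real.sq_sqrt]
          exact Finset.sum_nonneg fun _ _ => sq_nonneg _
        have hsumw : ∑ i, ((w i : ℝ)) ^ 2 = a ^ 2 := by
          rw [← hw.2, euclNormZ, Real.sq_sqrt]
          exact Finset.sum_nonneg fun _ _ => sq_nonneg _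
        have herase : ∑ i ∈ Finset.univ.erase L, ((v i : ℝ)) ^ 2
            = ∑ i ∈ Finset.univ.erase L, ((w i : ℝ)) ^ 2 := by
          refine Finset.sum_congr rfl fun i hi => ?_
          rw [h1 i (Finset.mem_erase.mp hi).1]
        have hvL : ((v L : ℝ)) ^ 2 = ((w L : ℝ)) ^ 2 := by
          have hv' := Finset.add_sum_erase Finset.univ (fun i => ((v i : ℝ)) ^ 2)
            (Finset.mem_univ L)
          have hw' := Finset.add_sum_erase Finset.univ (fun i => ((w i : ℝ)) ^ 2)
            (Finset.mem_univ L)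
          rw [hsumv] at hv'
          rw [hsumw] at hw'
          linarith [herase]
        have hvLz : (v L) ^ 2 = (w L) ^ 2 := by exact_mod_cast hvL
        have hvw2 : v L = w L := by
          rcases mul_eq_zero.mp (show (v L - w L) * (v L + w L) = 0 by
            linear_combination hvLz) with h | h
          · omega
          · omega
        funext i
        by_cases hi : i = L
        · subst hi; exact hvw2
        · exact h1 i hi
    have hcardT0 : T0.card = ((2 * M + 1).toNat) ^ (d - 1) * 2 := by
      rw [hT0, Finset.card_product, Fintype.card_piFinset]
      congr 1
      rw [← Finset.mul_prod_erase Finset.univ (fun i => (A i).card) (Finset.mem_univ L)]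
      have h1 : (A L).card = 1 := by simp only [hA]; simp
      have h2 : ∀ i ∈ Finset.univ.erase L, (A i).card = (2 * M + 1).toNat := by
        intro i hi
        simp only [hA]
        rw [if_neg (Finset.mem_erase.mp hi).1, Int.card_Icc]
        congr 1
        ring
      rw [h1, Finset.prod_congr rfl h2, Finset.prod_const, one_mul,
        Finset.card_erase_of_mem (Finset.mem_univ L), Finset.card_univ,
        Fintype.card_fin]
    have hTS : T.card ≤ S.card := by
      rw [hT, Finset.card_subtype]
      exact Finset.card_filter_le _ _
    have hM1 : (1:ℤ) ≤ M := by
      have h1 : (1:ℝ) ≤ (M:ℝ) := le_trans ha (Int.le_ceil a)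
      exact_mod_cast h1
    have hMa : ((2 * M + 1).toNat : ℝ) ≤ 5 * a := by
      have h0 : ((2 * M + 1).toNat : ℤ) = 2 * M + 1 := Int.toNat_of_nonneg (by omega)
      have h1 : ((2 * M + 1).toNat : ℝ) = 2 * (M:ℝ) + 1 := by
        exact_mod_cast congrArg (fun z : ℤ => (z : ℝ)) h0
      have h2 : (M : ℝ) < a + 1 := Int.ceil_lt_add_one a
      rw [h1]
      linarith
    calc (T.card : ℝ) ≤ (T0.card : ℝ) := by exact_mod_cast hTS.trans hinj
      _ = ((2 * M + 1).toNat : ℝ) ^ (d - 1) * 2 := by rw [hcardT0]; push_cast; ring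
      _ ≤ (5 * a) ^ (d - 1) * 2 := by gcongr
      _ = 2 * (5 * a) ^ (d - 1) := by ring

lemma one_le_wt1 {ν : ℕ} (ℓ : Fin ν → ℤ) : 1 ≤ wt1 ℓ := le_max_left _ _

lemma wt1_nonneg {ν : ℕ} (ℓ : Fin ν → ℤ) : (0:ℝ) ≤ wt1 ℓ :=
  le_trans zero_le_one (one_le_wt1 ℓ)

lemma wt3_nonneg {ν : ℕ} (ℓ : Fin ν → ℤ) (a b : ℝ) : (0:ℝ) ≤ wt3 ℓ a b :=
  le_trans zero_le_one (le_max_left _ _)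

lemma blockHS_diag {ν d : ℕ} (r : (Fin ν → ℤ) → specT d → ℂ) (ℓ : Fin ν → ℤ) (a b : ℝ) :
    blockHSsq (diagOfSym r ℓ) a b =
      ∑' j : Idx d, (if jn j = a ∧ jn j = b then ‖r ℓ (specOf j)‖ ^ 2 else 0) := by
  unfold blockHSsq
  refine tsum_congr fun j => ?_
  rw [tsum_eq_single j ?_]
  · simp [diagOfSym]
  · intro j' hj'
    have : diagOfSym r ℓ j j' = 0 := by
      simp [diagOfSym, (Ne.symm hj' : j ≠ j')]
    rw [this]
    simp

lemma multN_nonneg {ν d : ℕ} (m s : ℝ) (r : (Fin ν → ℤ) → specT d → ℂ) :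
    0 ≤ multN m s r :=
  Real.iSup_nonneg fun α => mul_nonneg (Real.sqrt_nonneg _)
    (Real.rpow_nonneg (le_of_lt (spec_pos α)) _)

lemma wt3_le {ν : ℕ} (ℓ : Fin ν → ℤ) (a : ℝ) (ha : 1 ≤ a) :
    wt3 ℓ a a ≤ wt1 ℓ * a := by
  have hw1 : 1 ≤ wt1 ℓ := le_max_left _ _
  have hw0 : 0 ≤ wt1 ℓ := by linarith
  rw [wt3, max_self]
  refine max_le ?_ (max_le ?_ ?_)
  · calc (1:ℝ) = 1 * 1 := by ring
      _ ≤ wt1 ℓ * a := by gcongr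
  · calc euclNormZ ℓ ≤ wt1 ℓ := le_max_right _ _
      _ = wt1 ℓ * 1 := by ring
      _ ≤ wt1 ℓ * a := by gcongr
  · calc a = 1 * a := by ring
      _ ≤ wt1 ℓ * a := by gcongr

/-- Key per-pair bound. -/
lemma key_bound {ν d : ℕ} (hd : 1 ≤ d) {s : ℝ} (hs : 0 ≤ s)
    (r : (Fin ν → ℤ) → specT d → ℂ) (hr : MultFin (-s - ((d:ℝ)-1)/2) s r)
    (α β : specT d) :
    Real.sqrt (decaySq s (diagOfSym r) α.1 β.1) ≤
      Real.sqrt (2 * 5 ^ (d-1)) *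
        (sobNphi s (fun ℓ => r ℓ α) * α.1 ^ (-(-s - ((d:ℝ)-1)/2))) := by
  have hC0 : (0:ℝ) ≤ 2 * 5 ^ (d-1) := by positivity
  have ha1 : 1 ≤ α.1 := one_le_spec α
  have ha0 : (0:ℝ) < α.1 := spec_pos α
  have hRHS0 : 0 ≤ Real.sqrt (2 * 5 ^ (d-1)) *
      (sobNphi s (fun ℓ => r ℓ α) * α.1 ^ (-(-s - ((d:ℝ)-1)/2))) := by
    apply mul_nonneg (Real.sqrt_nonneg _)
    exact mul_nonneg (Real.sqrt_nonneg _) (Real.rpow_nonneg ha0.le _)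
  by_cases hab : α.1 = β.1
  case neg =>
    -- decaySq vanishes off the diagonal
    have hz : decaySq s (diagOfSym r) α.1 β.1 = 0 := by
      unfold decaySq
      have : ∀ ℓ : Fin ν → ℤ, (wt3 ℓ α.1 β.1) ^ (2*s) * blockHSsq (diagOfSym r ℓ) α.1 β.1
          = 0 := by
        intro ℓ
        have hb : blockHSsq (diagOfSym r ℓ) α.1 β.1 = 0 := by
          rw [blockHS_diag r ℓ α.1 β.1]
          have : ∀ j : Idx d,
              (if jn j = α.1 ∧ jn j = β.1 then ‖r ℓ (specOf j)‖ ^ 2 else 0) = 0 := by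
            intro j
            rw [if_neg]
            rintro ⟨h1, h2⟩
            exact hab (h1 ▸ h2 ▸ rfl)
          rw [tsum_congr this, tsum_zero]
        rw [hb, mul_zero]
      rw [tsum_congr this, tsum_zero]
    rw [hz, Real.sqrt_zero]
    exact hRHS0
  case pos =>
    set a := α.1 with haa
    obtain ⟨T, hT, hTcard⟩ := count_sphere hd a ha1
    set t := ∑' ℓ : Fin ν → ℤ, (wt1 ℓ) ^ (2*s) * ‖r ℓ α‖ ^ 2 with ht
    have ht0 : 0 ≤ t := tsum_nonneg fun ℓ =>
      mul_nonneg (Real.rpow_nonneg (wt1_nonneg ℓ) _) (sq_nonneg _)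
    have hsob : sobNphi s (fun ℓ => r ℓ α) ^ 2 = t := by
      rw [sobNphi, Real.sq_sqrt]
      exact tsum_nonneg fun ℓ =>
        mul_nonneg (Real.rpow_nonneg (wt1_nonneg ℓ) _) (sq_nonneg _)
    -- blockwise bound
    have hblock : ∀ ℓ : Fin ν → ℤ,
        blockHSsq (diagOfSym r ℓ) a β.1 ≤ (T.card : ℝ) * ‖r ℓ α‖ ^ 2 := by
      intro ℓ
      rw [blockHS_diag]
      have hzero : ∀ j : Idx d, j ∉ T →
          (if jn j = a ∧ jn j = β.1 then ‖r ℓ (specOf j)‖ ^ 2 else 0) = 0 := by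
        intro j hj
        rw [if_neg]
        rintro ⟨h1, _⟩
        exact hj (hT j h1)
      rw [tsum_eq_sum hzero]
      calc ∑ j ∈ T, (if jn j = a ∧ jn j = β.1 then ‖r ℓ (specOf j)‖ ^ 2 else 0)
          ≤ ∑ _j ∈ T, ‖r ℓ α‖ ^ 2 := by
            refine Finset.sum_le_sum fun j _ => ?_
            by_cases hj : jn j = a ∧ jn j = β.1
            · rw [if_pos hj]
              have : specOf j = α := Subtype.ext hj.1
              rw [this]
            · rw [if_neg hj]
              positivity
        _ = (T.card : ℝ) * ‖r ℓ α‖ ^ 2 := by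
            rw [Finset.sum_const, nsmul_eq_mul]
    -- termwise bound for decaySq
    set K : ℝ := 2 * (5 * a) ^ (d-1) * a ^ (2*s) with hK
    have hK0 : 0 ≤ K := by
      apply mul_nonneg (by positivity)
      exact Real.rpow_nonneg ha0.le _
    have hterm : ∀ ℓ : Fin ν → ℤ,
        (wt3 ℓ a β.1) ^ (2*s) * blockHSsq (diagOfSym r ℓ) a β.1
          ≤ K * ((wt1 ℓ) ^ (2*s) * ‖r ℓ α‖ ^ 2) := by
      intro ℓ
      have hb0 : 0 ≤ blockHSsq (diagOfSym r ℓ) a β.1 := by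
        unfold blockHSsq
        refine tsum_nonneg fun j => tsum_nonneg fun j' => ?_
        by_cases h : jn j = a ∧ jn j' = β.1
        · rw [if_pos h]; positivity
        · rw [if_neg h]
      have hw3 : (wt3 ℓ a β.1) ^ (2*s) ≤ (wt1 ℓ) ^ (2*s) * a ^ (2*s) := by
        rw [← Real.mul_rpow (wt1_nonneg ℓ) ha0.le]
        apply Real.rpow_le_rpow ?_ ?_ (by linarith)
        · exact le_trans zero_le_one (le_max_left _ _)
        · rw [← hab]

          exact wt3_le ℓ a ha1

      calc (wt3 ℓ a β.1) ^ (2*s) * blockHSsq (diagOfSym r ℓ) a β.1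
          ≤ ((wt1 ℓ) ^ (2*s) * a ^ (2*s)) * ((T.card : ℝ) * ‖r ℓ α‖ ^ 2) :=
            mul_le_mul hw3 (hblock ℓ) hb0 (mul_nonneg
              (Real.rpow_nonneg (wt1_nonneg ℓ) _)
              (Real.rpow_nonneg ha0.le _))
        _ ≤ ((wt1 ℓ) ^ (2*s) * a ^ (2*s)) * ((2 * (5 * a) ^ (d-1)) * ‖r ℓ α‖ ^ 2) := by
            have h1 : 0 ≤ (wt1 ℓ) ^ (2*s) :=
              Real.rpow_nonneg (wt1_nonneg ℓ) _
            have h2 : 0 ≤ a ^ (2*s) := Real.rpow_nonneg ha0.le _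
            gcongr
        _ = K * ((wt1 ℓ) ^ (2*s) * ‖r ℓ α‖ ^ 2) := by rw [hK]; ring
    -- sum
    have hsummand : Summable fun ℓ : Fin ν → ℤ => K * ((wt1 ℓ) ^ (2*s) * ‖r ℓ α‖ ^ 2) :=
      (hr.1 α).mul_left K
    have hterm0 : ∀ ℓ : Fin ν → ℤ,
        0 ≤ (wt3 ℓ a β.1) ^ (2*s) * blockHSsq (diagOfSym r ℓ) a β.1 := by
      intro ℓ
      apply mul_nonneg (Real.rpow_nonneg (wt3_nonneg ℓ a β.1) _)
      unfold blockHSsq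
      refine tsum_nonneg fun j => tsum_nonneg fun j' => ?_
      by_cases h : jn j = a ∧ jn j' = β.1
      · rw [if_pos h]; positivity
      · rw [if_neg h]
    have hdecay : decaySq s (diagOfSym r) a β.1 ≤ K * t := by
      unfold decaySq
      calc ∑' ℓ : Fin ν → ℤ, (wt3 ℓ a β.1) ^ (2*s) * blockHSsq (diagOfSym r ℓ) a β.1
          ≤ ∑' ℓ : Fin ν → ℤ, K * ((wt1 ℓ) ^ (2*s) * ‖r ℓ α‖ ^ 2) :=
            Summable.tsum_le_tsum hterm
              (Summable.of_nonneg_of_le hterm0 hterm hsummand) hsummand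
        _ = K * t := by rw [ht, tsum_mul_left]
    -- sqrt juggling
    have hrpow : -(-s - ((d:ℝ)-1)/2) = s + ((d:ℝ)-1)/2 := by ring
    have hsq : K * t ≤ (Real.sqrt (2 * 5 ^ (d-1)) *
        (sobNphi s (fun ℓ => r ℓ α) * a ^ (-(-s - ((d:ℝ)-1)/2)))) ^ 2 := by
      have e1 : (Real.sqrt (2 * 5 ^ (d-1))) ^ 2 = 2 * 5 ^ (d-1) := Real.sq_sqrt hC0
      have e2 : (a ^ (-(-s - ((d:ℝ)-1)/2))) ^ 2 = a ^ (2*s) * a ^ ((d:ℝ)-1) := by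
        rw [hrpow, ← Real.rpow_natCast (a ^ (s + ((d:ℝ)-1)/2)) 2, ← Real.rpow_mul ha0.le]
        rw [← Real.rpow_add ha0]
        congr 1
        push_cast
        ring
      have e3 : a ^ ((d:ℝ)-1) = a ^ (d-1 : ℕ) := by
        rw [← Real.rpow_natCast a (d-1)]
        congr 1
        have : ((d - 1 : ℕ) : ℝ) = (d:ℝ) - 1 := by
          have := Nat.cast_sub hd (R := ℝ)
          simpa using this
        rw [this]
      have e4 : (5 * a) ^ (d-1 : ℕ) = 5 ^ (d-1 : ℕ) * a ^ (d-1 : ℕ) := mul_pow _ _ _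
      rw [mul_pow, mul_pow, e1, e2, hsob, e3]
      rw [hK, e4]
      ring_nf
      nlinarith [ht0, Real.rpow_nonneg ha0.le (2*s), pow_nonneg ha0.le (d-1),
        pow_nonneg (show (0:ℝ) ≤ 5 by norm_num) (d-1)]
    calc Real.sqrt (decaySq s (diagOfSym r) a β.1)
        ≤ Real.sqrt ((Real.sqrt (2 * 5 ^ (d-1)) *
            (sobNphi s (fun ℓ => r ℓ α) * a ^ (-(-s - ((d:ℝ)-1)/2)))) ^ 2) :=
          Real.sqrt_le_sqrt (hdecay.trans hsq)
      _ = _ := Real.sqrt_sq hRHS0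

lemma decayN_le {ν d : ℕ} (hd : 1 ≤ d) {s : ℝ} (hs : 0 ≤ s)
    (r : (Fin ν → ℤ) → specT d → ℂ) (hr : MultFin (-s - ((d:ℝ)-1)/2) s r) :
    decayN s (diagOfSym r) ≤
      Real.sqrt (2 * 5 ^ (d-1)) * multN (-s - ((d:ℝ)-1)/2) s r := by
  have hC := Real.sqrt_nonneg ((2 * 5 ^ (d-1) : ℝ))
  rw [decayN]
  refine Real.iSup_le (fun p => ?_) (mul_nonneg hC (multN_nonneg _ _ _))
  calc Real.sqrt (decaySq s (diagOfSym r) p.1.1 p.2.1)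
      ≤ Real.sqrt (2 * 5 ^ (d-1)) *
          (sobNphi s (fun ℓ => r ℓ p.1) * p.1.1 ^ (-(-s - ((d:ℝ)-1)/2))) :=
        key_bound hd hs r hr p.1 p.2
    _ ≤ _ := by
        apply mul_le_mul_of_nonneg_left ?_ hC
        rw [multN]
        exact le_ciSup hr.2 p.1

end Aux


/-- **Multiplier norm controls the block-decay norm.** For `s ≥ 0` and a
`φ`-dependent Fourier multiplier `r` of order `−s − (d−1)/2`, the family `R(φ) = Op(r(φ,·))`
satisfies `|R|_s ≤ C ∥Op(r)∥_{−s−(d−1)/2, s}` with `C` depending only on `d`; the same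
estimate holds between the corresponding `Lip(γ)` norms. -/
theorem stmt16 (d : ℕ) (hd : 1 ≤ d) :
    ∃ C : ℝ, 0 < C ∧
      ∀ ν : ℕ, 1 ≤ ν → ∀ s : ℝ, 0 ≤ s →
        (∀ r : (Fin ν → ℤ) → specT d → ℂ,
          MultFin (-s - ((d : ℝ) - 1) / 2) s r →
          decayN s (diagOfSym r) ≤ C * multN (-s - ((d : ℝ) - 1) / 2) s r) ∧
        (∀ γ : ℝ, 0 < γ → ∀ Ωo : Set (Fin ν → ℝ),
          ∀ rf : (Fin ν → ℝ) → (Fin ν → ℤ) → specT d → ℂ,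
            LipFin Ωo (multN (-s - ((d : ℝ) - 1) / 2) s)
              (MultFin (-s - ((d : ℝ) - 1) / 2) s) rf →
            lipN γ Ωo (decayN s) (fun ω => diagOfSym (rf ω)) ≤
              C * lipN γ Ωo (multN (-s - ((d : ℝ) - 1) / 2) s) rf) := by
  refine ⟨Real.sqrt (2 * 5 ^ (d-1)), Real.sqrt_pos.mpr (by positivity), ?_⟩
  intro ν hν s hs
  have hC := Real.sqrt_nonneg ((2 * 5 ^ (d-1) : ℝ))
  constructor
  · intro r hr
    exact decayN_le hd hs r hr
  · intro γ hγ Ωo rf hLip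
    obtain ⟨hP, hPd, hB1, hB2⟩ := hLip
    have hdiag : ∀ f g : (Fin ν → ℤ) → specT d → ℂ,
        diagOfSym f - diagOfSym g = diagOfSym (f - g) := by
      intro f g
      funext ℓ j j'
      simp only [Pi.sub_apply, diagOfSym]
      by_cases h : j = j'
      · simp [h]
      · simp [h]
    rw [lipN, lipN]
    have hA : (⨆ ω : Ωo, decayN s ((fun ω' : Fin ν → ℝ => diagOfSym (rf ω')) ω)) ≤
        Real.sqrt (2 * 5 ^ (d-1)) *
          ⨆ ω : Ωo, multN (-s-((d:ℝ)-1)/2) s (rf ω) := by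
      refine Real.iSup_le (fun ω => ?_)
        (mul_nonneg hC (Real.iSup_nonneg fun ω => multN_nonneg _ _ _))
      refine (decayN_le hd hs _ (hP ω ω.2)).trans ?_
      exact mul_le_mul_of_nonneg_left (le_ciSup hB1 ω) hC
    have hB : (⨆ p : OmPairs Ωo,
          decayN s ((fun ω' : Fin ν → ℝ => diagOfSym (rf ω')) p.1.1 -
            (fun ω' : Fin ν → ℝ => diagOfSym (rf ω')) p.1.2) / eDistR p.1.1 p.1.2) ≤
        Real.sqrt (2 * 5 ^ (d-1)) *
          ⨆ p : OmPairs Ωo,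
            multN (-s-((d:ℝ)-1)/2) s (rf p.1.1 - rf p.1.2) / eDistR p.1.1 p.1.2 := by
      refine Real.iSup_le (fun p => ?_)
        (mul_nonneg hC (Real.iSup_nonneg fun p =>
          div_nonneg (multN_nonneg _ _ _) (Real.sqrt_nonneg _)))
      have h1 : decayN s (diagOfSym (rf p.1.1) - diagOfSym (rf p.1.2)) ≤
          Real.sqrt (2 * 5 ^ (d-1)) * multN (-s-((d:ℝ)-1)/2) s (rf p.1.1 - rf p.1.2) := by
        rw [hdiag]
        exact decayN_le hd hs _ (hPd p.1.1 p.2.1 p.1.2 p.2.2.1)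
      have he : (0:ℝ) ≤ eDistR p.1.1 p.1.2 := Real.sqrt_nonneg _
      calc decayN s (diagOfSym (rf p.1.1) - diagOfSym (rf p.1.2)) / eDistR p.1.1 p.1.2
          ≤ (Real.sqrt (2 * 5 ^ (d-1)) *
              multN (-s-((d:ℝ)-1)/2) s (rf p.1.1 - rf p.1.2)) / eDistR p.1.1 p.1.2 :=
            div_le_div_of_nonneg_right h1 he
        _ = Real.sqrt (2 * 5 ^ (d-1)) *
              (multN (-s-((d:ℝ)-1)/2) s (rf p.1.1 - rf p.1.2) / eDistR p.1.1 p.1.2) :=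
            mul_div_assoc _ _ _
        _ ≤ _ := mul_le_mul_of_nonneg_left (le_ciSup hB2 p) hC
    calc (⨆ ω : Ωo, decayN s ((fun ω' : Fin ν → ℝ => diagOfSym (rf ω')) ω)) +
          γ * ⨆ p : OmPairs Ωo,
            decayN s ((fun ω' : Fin ν → ℝ => diagOfSym (rf ω')) p.1.1 -
              (fun ω' : Fin ν → ℝ => diagOfSym (rf ω')) p.1.2) / eDistR p.1.1 p.1.2
        ≤ (Real.sqrt (2 * 5 ^ (d-1)) * ⨆ ω : Ωo, multN (-s-((d:ℝ)-1)/2) s (rf ω)) +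
          γ * (Real.sqrt (2 * 5 ^ (d-1)) *
            ⨆ p : OmPairs Ωo,
              multN (-s-((d:ℝ)-1)/2) s (rf p.1.1 - rf p.1.2) / eDistR p.1.1 p.1.2) :=
          add_le_add hA (mul_le_mul_of_nonneg_left hB hγ.le)
      _ = Real.sqrt (2 * 5 ^ (d-1)) *
            ((⨆ ω : Ωo, multN (-s-((d:ℝ)-1)/2) s (rf ω)) +
              γ * ⨆ p : OmPairs Ωo,
                multN (-s-((d:ℝ)-1)/2) s (rf p.1.1 - rf p.1.2) / eDistR p.1.1 p.1.2) := by
          ring
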